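/- Let z(y) denote the inverse function of y(z) = z log z on z ≥ 1/e. Then z is strictly increasing; moreover, defining z₀(y) = y and z_n(y) = y / log z_{n−1}(y) for n ≥ 1, for every y > e the interleaving z₁(y) < z₃(y) < ⋯ < z(y) < ⋯ < z₂(y) < z₀(y) holds; in particular z(y) < z₂(y) = y / log(y / log y) for all y > e. -/

import Mathlib

theorem inverse_of_z_log_z_nested_logarithms
    (z : ℝ → ℝ)
    (hz_inv : ∀ y : ℝ, -(1 / Real.exp 1) ≤ y →
      1 / Real.exp 1 ≤ z y ∧ z y * Real.log (z y) = y)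
    (hz_inv' : ∀ w : ℝ, 1 / Real.exp 1 ≤ w → z (w * Real.log w) = w)
    (zs : ℕ → ℝ → ℝ)
    (hzs0 : ∀ y, zs 0 y = y)
    (hzs : ∀ n y, zs (n + 1) y = y / Real.log (zs n y)) :
    StrictMonoOn z (Set.Ici (-(1 / Real.exp 1))) ∧
    ∀ y : ℝ, Real.exp 1 < y →
      -- the odd approximants increase: z₁ < z₃ < z₅ < ⋯
      (∀ n : ℕ, zs (2 * n + 1) y < zs (2 * n + 3) y) ∧
      -- the even approximants decrease: ⋯ < z₄ < z₂ < z₀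
      (∀ n : ℕ, zs (2 * n + 2) y < zs (2 * n) y) ∧
      -- every odd approximant lies below z
      (∀ n : ℕ, zs (2 * n + 1) y < z y) ∧
      -- z lies below every even approximant
      (∀ n : ℕ, z y < zs (2 * n) y) ∧
      -- in particular z(y) < z₂(y) = y / log (y / log y)
      zs 2 y = y / Real.log (y / Real.log y) ∧
      z y < y / Real.log (y / Real.log y) := by
  have he : (0:ℝ) < Real.exp 1 := Real.exp_pos 1
  have he1 : (1:ℝ) < Real.exp 1 := by
    have := Real.exp_one_gt_d9; linarith
  have hie : (0:ℝ) < 1 / Real.exp 1 := by positivity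
  have h1e1 : (1:ℝ) / Real.exp 1 < 1 := by rw [div_lt_one he]; exact he1
  have hloge : Real.log (Real.exp 1) = 1 := Real.log_exp 1
  have hlogie : Real.log (1 / Real.exp 1) = -1 := by
    rw [Real.log_div one_ne_zero he.ne', Real.log_one, hloge]; ring
  -- g(t) = t * log t is strictly monotone on [1/e, ∞)
  have gmono : StrictMonoOn (fun t : ℝ => t * Real.log t) (Set.Ici (1 / Real.exp 1)) := by
    apply strictMonoOn_of_deriv_pos (convex_Ici _)
    · apply ContinuousOn.mul continuousOn_id
      apply Real.continuousOn_log.mono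
      intro x hx
      simp only [Set.mem_Ici] at hx
      simp only [Set.mem_compl_iff, Set.mem_singleton_iff]
      nlinarith
    · intro x hx
      rw [interior_Ici] at hx
      have hx0 : 0 < x := lt_trans hie hx
      have hd : HasDerivAt (fun t : ℝ => t * Real.log t) (Real.log x + 1) x := by
        have h1 := (hasDerivAt_id x).mul (Real.hasDerivAt_log hx0.ne')
        have h2 : Real.log x + 1 = 1 * Real.log x + id x * x⁻¹ := by simp [hx0.ne']
        rw [h2]; exact h1
      rw [hd.deriv]
      have := Real.log_lt_log hie hx
      rw [hlogie] at this
      linarith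
  have zmono : StrictMonoOn z (Set.Ici (-(1 / Real.exp 1))) := by
    intro a ha b hb hab
    obtain ⟨hza, hza2⟩ := hz_inv a ha
    obtain ⟨hzb, hzb2⟩ := hz_inv b hb
    rcases lt_trichotomy (z a) (z b) with h | h | h
    · exact h
    · exfalso; rw [h, hzb2] at hza2; exact absurd hza2 hab.ne'
    · exfalso
      have := gmono (Set.mem_Ici.mpr hzb) (Set.mem_Ici.mpr hza) h
      simp only at this
      rw [hza2, hzb2] at this
      exact absurd this (not_lt.mpr hab.le)
  refine ⟨zmono, fun y hy => ?_⟩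
  have hy0 : (0:ℝ) < y := lt_trans he hy
  have hyI : -(1 / Real.exp 1) ≤ y := by linarith
  obtain ⟨hw1, hw2⟩ := hz_inv y hyI
  set w := z y with hwdef
  have hlogy : 1 < Real.log y := by
    have := Real.log_lt_log he hy; rwa [hloge] at this
  -- w > e
  have hwe : Real.exp 1 < w := by
    by_contra h
    push_neg at h
    have hee : 1 / Real.exp 1 ≤ Real.exp 1 := le_of_lt (lt_trans h1e1 he1)
    rcases eq_or_lt_of_le h with h' | h'
    · rw [h', hloge, mul_one] at hw2; linarith
    · have := gmono (Set.mem_Ici.mpr hw1) (Set.mem_Ici.mpr hee) h'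
      simp only [hloge, mul_one] at this
      rw [hw2] at this; linarith
  have hw0 : 0 < w := lt_trans he hwe
  have hlogw : 1 < Real.log w := by
    have := Real.log_lt_log he hwe; rwa [hloge] at this
  -- w < y
  have hwy : w < y := by
    by_contra h
    push_neg at h
    have hgy : y < y * Real.log y := by nlinarith
    rcases eq_or_lt_of_le h with h' | h'
    · rw [← h'] at hw2; nlinarith
    · have hyI' : y ∈ Set.Ici (1 / Real.exp 1) := Set.mem_Ici.mpr (by linarith)
      have := gmono hyI' (Set.mem_Ici.mpr hw1) h'
      simp only at this
      rw [hw2] at this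
      nlinarith
  -- y / log w = w
  have hlw0 : Real.log w ≠ 0 := by linarith
  have hweq : y / Real.log w = w := by
    rw [← hw2]; exact mul_div_cancel_right₀ w hlw0
  -- e * log y < y, hence e < y / log y
  have hkey : Real.exp 1 * Real.log y < y := by
    have hx : 0 < y / Real.exp 1 := by positivity
    have hne : y / Real.exp 1 ≠ 1 := by
      intro h; rw [div_eq_one_iff_eq he.ne'] at h; linarith
    have h2 := Real.log_lt_sub_one_of_pos hx hne
    rw [Real.log_div hy0.ne' he.ne', hloge] at h2
    have h3 : Real.log y < y / Real.exp 1 := by linarith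
    have h4 : Real.exp 1 * (y / Real.exp 1) = y := by field_simp
    nlinarith
  have hz1e : Real.exp 1 < y / Real.log y := by
    rw [lt_div_iff₀ (by linarith : (0:ℝ) < Real.log y)]; linarith
  -- generic decreasing step of t ↦ y / log t
  have mono2 : ∀ a b : ℝ, Real.exp 1 < a → a < b →
      y / Real.log b < y / Real.log a := by
    intro a b ha hab
    have h1 : 1 < Real.log a := by
      have := Real.log_lt_log he ha; rwa [hloge] at this
    have h2 : Real.log a < Real.log b := Real.log_lt_log (lt_trans he ha) hab
    exact div_lt_div_of_pos_left hy0 (by linarith) h2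
  have stepOdd : ∀ a : ℝ, Real.exp 1 < a → a < w →
      w < y / Real.log a ∧ y / Real.log a < y := by
    intro a hae haw
    have h1 : 1 < Real.log a := by
      have := Real.log_lt_log he hae; rwa [hloge] at this
    refine ⟨?_, ?_⟩
    · rw [← hweq]; exact mono2 a w hae haw
    · rw [div_lt_iff₀ (by linarith : (0:ℝ) < Real.log a)]
      have := mul_lt_mul_of_pos_left h1 hy0
      linarith
  have stepEven : ∀ b : ℝ, w < b → b ≤ y →
      Real.exp 1 < y / Real.log b ∧ y / Real.log b < w := by
    intro b hwb hby
    have hb0 : 0 < b := lt_trans hw0 hwb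
    have hlwb : Real.log w < Real.log b := Real.log_lt_log hw0 hwb
    have hlby : Real.log b ≤ Real.log y := Real.log_le_log hb0 hby
    refine ⟨?_, ?_⟩
    · have h5 : y / Real.log y ≤ y / Real.log b :=
        div_le_div_of_nonneg_left (le_of_lt hy0) (by linarith) hlby
      linarith
    · rw [← hweq]; exact div_lt_div_of_pos_left hy0 (by linarith) hlwb
  -- Invariant: odd iterates in (e, w), even iterates in (w, y]
  have P : ∀ n : ℕ, (Real.exp 1 < zs (2*n+1) y ∧ zs (2*n+1) y < w) ∧
      w < zs (2*n) y ∧ zs (2*n) y ≤ y := by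
    intro n
    induction n with
    | zero =>
      have h0 : zs (2*0) y = y := by norm_num [hzs0]
      have h1 : zs (2*0+1) y = y / Real.log y := by
        norm_num [hzs 0 y, hzs0]
      obtain ⟨h2, h3⟩ := stepEven y hwy le_rfl
      rw [h0, h1]
      exact ⟨⟨h2, h3⟩, hwy, le_rfl⟩
    | succ n ih =>
      obtain ⟨⟨ha1, ha2⟩, hb1, hb2⟩ := ih
      have e1 : zs (2*(n+1)) y = y / Real.log (zs (2*n+1) y) := by
        rw [show 2*(n+1) = (2*n+1)+1 by ring, hzs]
      have e2 : zs (2*(n+1)+1) y = y / Real.log (zs (2*(n+1)) y) := hzs _ y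
      obtain ⟨hc1, hc2⟩ := stepOdd _ ha1 ha2
      rw [← e1] at hc1 hc2
      obtain ⟨hd1, hd2⟩ := stepEven _ hc1 (le_of_lt hc2)
      rw [← e2] at hd1 hd2
      exact ⟨⟨hd1, hd2⟩, hc1, le_of_lt hc2⟩
  -- Interleaving chains
  have Q : ∀ n : ℕ, zs (2*n+2) y < zs (2*n) y ∧ zs (2*n+1) y < zs (2*n+3) y := by
    intro n
    induction n with
    | zero =>
      have P0 := P 0
      have P1 := P 1
      norm_num at P0 P1 ⊢
      obtain ⟨⟨h1e', h1w⟩, _, _⟩ := P0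
      obtain ⟨⟨h3e, h3w⟩, h2w, h2y⟩ := P1
      have hz0 : zs 0 y = y := hzs0 y
      have e2 : zs 2 y = y / Real.log (zs 1 y) := hzs 1 y
      have e3 : zs 3 y = y / Real.log (zs 2 y) := hzs 2 y
      have e1 : zs 1 y = y / Real.log (zs 0 y) := hzs 0 y
      constructor
      · -- zs 2 < zs 0
        have hlz1 : 1 < Real.log (zs 1 y) := by
          have := Real.log_lt_log he h1e'; rwa [hloge] at this
        rw [e2, hz0, div_lt_iff₀ (by linarith : (0:ℝ) < Real.log (zs 1 y))]
        have := mul_lt_mul_of_pos_left hlz1 hy0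
        linarith
      · -- zs 1 < zs 3
        have h20 : zs 2 y < y := by
          have hlz1 : 1 < Real.log (zs 1 y) := by
            have := Real.log_lt_log he h1e'; rwa [hloge] at this
          rw [e2, div_lt_iff₀ (by linarith : (0:ℝ) < Real.log (zs 1 y))]
          have := mul_lt_mul_of_pos_left hlz1 hy0
          linarith
        have h2e : Real.exp 1 < zs 2 y := lt_trans hwe h2w
        rw [e1, e3, hz0]
        exact mono2 _ _ h2e h20
    | succ n ih =>
      obtain ⟨ih1, ih2⟩ := ih
      have Pn := P n
      have Pn1 := P (n+1)
      have Pn2 := P (n+2)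
      -- e < zs (2n+1), e < zs (2n+3) (from Pn1 since 2*(n+1)+1 = 2n+3)
      have hodd1 : Real.exp 1 < zs (2*n+1) y := Pn.1.1
      have heven2 : w < zs (2*(n+2)) y := Pn2.2.1
      -- step 1: zs (2n+4) < zs (2n+2)
      have s1 : zs (2*n+4) y < zs (2*n+2) y := by
        have e4 : zs (2*n+4) y = y / Real.log (zs (2*n+3) y) := by
          rw [show 2*n+4 = (2*n+3)+1 by ring, hzs]
        have e2' : zs (2*n+2) y = y / Real.log (zs (2*n+1) y) := by
          rw [show 2*n+2 = (2*n+1)+1 by ring, hzs]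
        rw [e4, e2']
        exact mono2 _ _ hodd1 ih2
      -- step 2: zs (2n+3) < zs (2n+5)
      have s2 : zs (2*n+3) y < zs (2*n+5) y := by
        have e5 : zs (2*n+5) y = y / Real.log (zs (2*n+4) y) := by
          rw [show 2*n+5 = (2*n+4)+1 by ring, hzs]
        have e3' : zs (2*n+3) y = y / Real.log (zs (2*n+2) y) := by
          rw [show 2*n+3 = (2*n+2)+1 by ring, hzs]
        have h4e : Real.exp 1 < zs (2*n+4) y := by
          have : (2*(n+2)) = 2*n+4 := by ring
          rw [this] at heven2
          exact lt_trans hwe heven2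
        rw [e5, e3']
        exact mono2 _ _ h4e s1
      constructor
      · rw [show 2*(n+1)+2 = 2*n+4 by ring, show 2*(n+1) = 2*n+2 by ring]; exact s1
      · rw [show 2*(n+1)+1 = 2*n+3 by ring, show 2*(n+1)+3 = 2*n+5 by ring]; exact s2
  have hform : zs 2 y = y / Real.log (y / Real.log y) := by
    have e1 : zs 1 y = y / Real.log y := by rw [hzs 0 y, hzs0 y]
    rw [hzs 1 y, e1]
  refine ⟨fun n => (Q n).2, fun n => (Q n).1, fun n => (P n).1.2, fun n => (P n).2.1, hform, ?_⟩
  have := (P 1).2.1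
  norm_num at this
  rw [← hform]
  exact this
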